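/- Let L be a linear classifier on {0,1}^d with weights w, threshold t, instance x, scores sorted decreasingly, and y^(k) the top-k partial instance. Fix δ ∈ (0,1]. Define Min(L, x, δ) as the minimum number of defined coordinates of a partial instance y ⊆ x satisfying Pr_{z ∈ comp(y)}[L(z) = L(x)] ≥ δ. Then Min(L, x, δ) = k if and only if y^(k) is a δ-sufficient reason (its probability guarantee is ≥ δ) and either k = 0 or y^(k−1) is not. -/

import Mathlib

/-- Output of the linear classifier with weights `w` and threshold `t` on `z ∈ {0,1}^d`. -/
def linOut {d : ℕ} (w : Fin d → ℚ) (t : ℚ) (z : Fin d → Bool) : Bool :=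
  decide (t ≤ ∑ i, w i * (if z i then 1 else 0))

/-- Completions of a partial instance `y ∈ {0,1,⊥}^d`. -/
def completions {d : ℕ} (y : Fin d → Option Bool) : Finset (Fin d → Bool) :=
  Finset.univ.filter (fun z => ∀ i, ∀ b, y i = some b → z i = b)

/-- `Pr_{z ~ U(y)}[L(z) = L(x)]`, uniform over the completions of `y`. -/
def prSame {d : ℕ} (w : Fin d → ℚ) (t : ℚ) (x : Fin d → Bool)
    (y : Fin d → Option Bool) : ℚ :=
  (((completions y).filter (fun z => linOut w t z = linOut w t x)).card : ℚ)
    / ((completions y).card : ℚ)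

/-- Score of feature `i`: `w_i (2x_i - 1)(2L(x) - 1)`. -/
def score {d : ℕ} (w : Fin d → ℚ) (t : ℚ) (x : Fin d → Bool) (i : Fin d) : ℚ :=
  w i * (2 * (if x i then 1 else 0) - 1) * (2 * (if linOut w t x then 1 else 0) - 1)

/-- `y ⊆ x`: the partial instance `y` agrees with `x` on its defined coordinates. -/
def subsetOf {d : ℕ} (y : Fin d → Option Bool) (x : Fin d → Bool) : Prop :=
  ∀ i, ∀ b, y i = some b → x i = b

/-- `topk x k` is the partial instance defined (agreeing with `x`) exactly on the
first `k` coordinates. -/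
def topk {d : ℕ} (x : Fin d → Bool) (k : ℕ) : Fin d → Option Bool :=
  fun i => if (i : ℕ) < k then some (x i) else none

/-- Number of defined coordinates of a partial instance. -/
def definedCount {d : ℕ} (y : Fin d → Option Bool) : ℕ :=
  (Finset.univ.filter (fun i => (y i).isSome)).card

namespace MSR
variable {d : ℕ}

def chi (c : Bool) : ℚ := if c then 1 else 0

def val (w : Fin d → ℚ) (z : Fin d → Bool) : ℚ := ∑ i, w i * chi (z i)

def eps (w : Fin d → ℚ) (t : ℚ) (x : Fin d → Bool) : ℚ := if linOut w t x then 1 else -1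

lemma linOut_eq_val (w : Fin d → ℚ) (t : ℚ) (z : Fin d → Bool) :
    linOut w t z = decide (t ≤ val w z) := rfl

lemma chi_not (c : Bool) : chi (!c) = 1 - chi c := by cases c <;> simp [chi]

lemma eps_mul (w : Fin d → ℚ) (t : ℚ) (x : Fin d → Bool) (i : Fin d) :
    eps w t x * (w i * (2 * chi (x i) - 1)) = score w t x i := by
  unfold eps score chi
  rcases linOut w t x <;> simp <;> ring

lemma agree_mono (w : Fin d → ℚ) (t : ℚ) (x : Fin d → Bool) (z z' : Fin d → Bool)
    (h : 0 ≤ eps w t x * (val w z' - val w z))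
    (hz : linOut w t z = linOut w t x) : linOut w t z' = linOut w t x := by
  rcases hb : linOut w t x with _ | _ <;>
    rw [hb] at hz <;> rw [linOut_eq_val] at hz ⊢ <;>
    simp only [eps, hb] at h <;> norm_num at h <;>
    simp only [decide_eq_true_eq, decide_eq_false_iff_not, not_le] at hz ⊢ <;> nlinarith

def compX (x : Fin d → Bool) (A : Finset (Fin d)) : Finset (Fin d → Bool) :=
  Finset.univ.filter (fun z => ∀ i ∈ A, z i = x i)

lemma mem_compX {x : Fin d → Bool} {A : Finset (Fin d)} {z : Fin d → Bool} :
    z ∈ compX x A ↔ ∀ i ∈ A, z i = x i := by simp [compX]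

def agreeSet (w : Fin d → ℚ) (t : ℚ) (x : Fin d → Bool) (A : Finset (Fin d)) :
    Finset (Fin d → Bool) :=
  (compX x A).filter (fun z => linOut w t z = linOut w t x)

lemma card_compX (x : Fin d → Bool) (A : Finset (Fin d)) :
    (compX x A).card = 2 ^ (d - A.card) := by
  classical
  have hc : Fintype.card ↥(compX x A) = Fintype.card (↥(Aᶜ) → Bool) := by
    apply Fintype.card_congr
    refine
      { toFun := fun z i => z.1 i.1
        invFun := fun g => ⟨fun i => if h : i ∈ A then x i else g ⟨i, by simp [h]⟩, ?_⟩
        left_inv := ?_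
        right_inv := ?_ }
    · rw [mem_compX]; intro i hi; simp [hi]
    · rintro ⟨z, hz⟩
      rw [mem_compX] at hz
      ext i
      by_cases h : i ∈ A <;> simp [h, hz]
    · intro g
      funext i
      have : (i : Fin d) ∉ A := Finset.mem_compl.mp i.2
      simp [this]
  rw [← Fintype.card_coe, hc, Fintype.card_fun, Fintype.card_coe, Finset.card_compl]
  simp

open Finset

noncomputable def swapFun (x : Fin d → Bool) (A B : Finset (Fin d))
    (e : ↥(B \ A) ≃ ↥(A \ B)) (z : Fin d → Bool) : Fin d → Bool :=
  fun l => if h : l ∈ A \ B then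
      (if z ↑(e.symm ⟨l, h⟩) = x ↑(e.symm ⟨l, h⟩) then x l else !(x l))
    else if l ∈ B \ A then x l else z l

lemma swapFun_mem_sdiff (x : Fin d → Bool) (A B : Finset (Fin d))
    (e : ↥(B \ A) ≃ ↥(A \ B)) (z : Fin d → Bool) (q : ↥(B \ A)) :
    swapFun x A B e z ↑(e q) =
      (if z ↑q = x ↑q then x ↑(e q) else !(x ↑(e q))) := by
  have h : ((e q : Fin d)) ∈ A \ B := (e q).2
  rw [swapFun, dif_pos h]
  have : (⟨↑(e q), h⟩ : ↥(A \ B)) = e q := Subtype.ext rfl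
  rw [this, Equiv.symm_apply_apply]

lemma swapFun_mem_B (x : Fin d → Bool) (A B : Finset (Fin d))
    (e : ↥(B \ A) ≃ ↥(A \ B)) (z : Fin d → Bool) {l : Fin d} (hl : l ∈ B \ A) :
    swapFun x A B e z l = x l := by
  have h : l ∉ A \ B := fun h' => (Finset.mem_sdiff.mp h').2 (Finset.mem_sdiff.mp hl).1
  rw [swapFun, dif_neg h, if_pos hl]

lemma swapFun_other (x : Fin d → Bool) (A B : Finset (Fin d))
    (e : ↥(B \ A) ≃ ↥(A \ B)) (z : Fin d → Bool) {l : Fin d}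
    (h1 : l ∉ A \ B) (h2 : l ∉ B \ A) :
    swapFun x A B e z l = z l := by
  rw [swapFun, dif_neg h1, if_neg h2]

lemma swapFun_leftInv (x : Fin d → Bool) (A B : Finset (Fin d))
    (e : ↥(B \ A) ≃ ↥(A \ B)) (z : Fin d → Bool) (hz : ∀ i ∈ A, z i = x i) :
    swapFun x B A e.symm (swapFun x A B e z) = z := by
  funext l
  by_cases h1 : l ∈ B \ A
  · -- recovered via e
    rw [swapFun, dif_pos h1]
    have : (e.symm.symm ⟨l, h1⟩) = e ⟨l, h1⟩ := by rw [Equiv.symm_symm]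
    rw [this]
    rw [swapFun_mem_sdiff x A B e z ⟨l, h1⟩]
    rcases hxz : z l == x l with _ | _
    · have hne : z l ≠ x l := by simpa using hxz
      have : z l = !(x l) := by
        cases hzl : z l <;> cases hxl : x l <;> simp_all
      rw [if_neg hne]
      split
      · next hcon =>
          exfalso
          rcases hb : x ↑(e ⟨l, h1⟩) <;> simp [hb] at hcon
      · exact this.symm
    · have heq : z l = x l := by simpa using hxz
      rw [if_pos heq, if_pos rfl, heq]
  · by_cases h2 : l ∈ A \ B
    · rw [swapFun, dif_neg h1, if_pos h2]
      exact (hz l (Finset.mem_sdiff.mp h2).1).symm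
    · rw [swapFun, dif_neg h1, if_neg h2]
      exact swapFun_other x A B e z h2 h1

lemma swapFun_mem_compX (w : Fin d → ℚ) (t : ℚ) (x : Fin d → Bool) (A B : Finset (Fin d))
    (e : ↥(B \ A) ≃ ↥(A \ B)) {z : Fin d → Bool} (hz : z ∈ compX x A) :
    swapFun x A B e z ∈ compX x B := by
  rw [mem_compX] at hz ⊢
  intro l hl
  by_cases h1 : l ∈ B \ A
  · exact swapFun_mem_B x A B e z h1
  · have hlA : l ∈ A := by
      by_contra hno
      exact h1 (Finset.mem_sdiff.mpr ⟨hl, hno⟩)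
    have h2 : l ∉ A \ B := fun h' => (Finset.mem_sdiff.mp h').2 hl
    rw [swapFun_other x A B e z h2 h1]
    exact hz l hlA

lemma swapFun_val (w : Fin d → ℚ) (t : ℚ) (x : Fin d → Bool) (A B : Finset (Fin d))
    (e : ↥(B \ A) ≃ ↥(A \ B))
    (hsc : ∀ i ∈ A \ B, ∀ j ∈ B \ A, score w t x i ≤ score w t x j)
    {z : Fin d → Bool} (hz : z ∈ compX x A) :
    0 ≤ eps w t x * (val w (swapFun x A B e z) - val w z) := by
  classical
  rw [mem_compX] at hz
  set z' := swapFun x A B e z with hz'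
  have hdiff : val w z' - val w z = ∑ l, w l * (chi (z' l) - chi (z l)) := by
    rw [val, val, ← Finset.sum_sub_distrib]
    apply Finset.sum_congr rfl
    intro l _; ring
  have hsupp : ∀ l ∈ Finset.univ, l ∉ (A \ B) ∪ (B \ A) → w l * (chi (z' l) - chi (z l)) = 0 := by
    intro l _ hl
    rw [Finset.mem_union] at hl
    push_neg at hl
    rw [hz', swapFun_other x A B e z hl.1 hl.2]
    ring
  have hdisj : Disjoint (A \ B) (B \ A) := disjoint_sdiff_sdiff
  have h1 : val w z' - val w z
      = ∑ l ∈ A \ B, w l * (chi (z' l) - chi (z l))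
        + ∑ l ∈ B \ A, w l * (chi (z' l) - chi (z l)) := by
    rw [hdiff, ← Finset.sum_union hdisj]
    exact (Finset.sum_subset (Finset.subset_univ _) hsupp).symm
  have h2 : ∑ l ∈ A \ B, w l * (chi (z' l) - chi (z l))
      = ∑ q : ↥(B \ A), w ↑(e q) * (chi (z' ↑(e q)) - chi (z ↑(e q))) := by
    rw [← Finset.sum_coe_sort (A \ B) (fun l => w l * (chi (z' l) - chi (z l)))]
    exact (Equiv.sum_comp e (fun p : ↥(A \ B) => w ↑p * (chi (z' ↑p) - chi (z ↑p)))).symm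
  have h3 : ∑ l ∈ B \ A, w l * (chi (z' l) - chi (z l))
      = ∑ q : ↥(B \ A), w ↑q * (chi (z' ↑q) - chi (z ↑q)) :=
    (Finset.sum_coe_sort (B \ A) _).symm
  rw [h1, h2, h3, ← Finset.sum_add_distrib, Finset.mul_sum]
  apply Finset.sum_nonneg
  intro q _
  have hiq : ((e q : Fin d)) ∈ A \ B := (e q).2
  have hjq : ((q : Fin d)) ∈ B \ A := q.2
  have hzi : z ↑(e q) = x ↑(e q) := hz _ (Finset.mem_sdiff.mp hiq).1
  have hz'j : z' ↑q = x ↑q := swapFun_mem_B x A B e z hjq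
  have hz'i : z' ↑(e q) = (if z ↑q = x ↑q then x ↑(e q) else !(x ↑(e q))) :=
    swapFun_mem_sdiff x A B e z q
  by_cases hcase : z ↑q = x ↑q
  · rw [hz'i, if_pos hcase, hzi, hz'j, hcase]
    ring_nf
    simp
  · have hzj : z ↑q = !(x ↑q) := by
      cases hq : z ↑q <;> cases hx : x ↑q <;> simp_all
    rw [hz'i, if_neg hcase, hzi, hz'j, hzj, chi_not, chi_not]
    have hs := hsc _ hiq _ hjq
    have e1 := eps_mul w t x ↑(e q)
    have e2 := eps_mul w t x ↑q
    nlinarith [e1, e2, hs]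

lemma exchange_card (w : Fin d → ℚ) (t : ℚ) (x : Fin d → Bool) (A B : Finset (Fin d))
    (hcard : A.card = B.card)
    (hsc : ∀ i ∈ A \ B, ∀ j ∈ B \ A, score w t x i ≤ score w t x j) :
    (agreeSet w t x A).card ≤ (agreeSet w t x B).card := by
  classical
  have hBA : (B \ A).card = (A \ B).card := by rw [Finset.card_sdiff_comm hcard.symm]
  let e : ↥(B \ A) ≃ ↥(A \ B) := Finset.equivOfCardEq hBA
  apply Finset.card_le_card_of_injOn (swapFun x A B e)
  · intro z hzmem
    rw [agreeSet, Finset.mem_coe, Finset.mem_filter] at hzmem ⊢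
    refine ⟨swapFun_mem_compX w t x A B e hzmem.1, ?_⟩
    exact agree_mono w t x z _ (swapFun_val w t x A B e hsc hzmem.1) hzmem.2
  · intro z1 h1 z2 h2 heq
    rw [agreeSet, Finset.coe_filter] at h1 h2
    have hz1 : ∀ i ∈ A, z1 i = x i := mem_compX.mp h1.1
    have hz2 : ∀ i ∈ A, z2 i = x i := mem_compX.mp h2.1
    have := congrArg (swapFun x B A e.symm) heq
    rwa [swapFun_leftInv x A B e z1 hz1, swapFun_leftInv x A B e z2 hz2] at this

def blockB (d m : ℕ) : Finset (Fin d) := Finset.univ.filter (fun i => (i:ℕ) < m)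

lemma mem_blockB {m : ℕ} {i : Fin d} : i ∈ blockB d m ↔ (i : ℕ) < m := by simp [blockB]

lemma card_blockB (m : ℕ) (hm : m ≤ d) : (blockB d m).card = m := by
  apply Finset.card_eq_of_bijective (fun n hn => ⟨n, lt_of_lt_of_le hn hm⟩)
  · intro a ha
    rw [mem_blockB] at ha
    exact ⟨a, ha, rfl⟩
  · intro n hn
    rw [mem_blockB]
    exact hn
  · intro n n' hn hn' h
    simpa using congrArg Fin.val h

lemma completions_topk (x : Fin d → Bool) (m : ℕ) :
    completions (topk x m) = compX x (blockB d m) := by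
  ext z
  simp only [completions, compX, Finset.mem_filter, Finset.mem_univ, true_and, mem_blockB, blockB]
  constructor
  · intro h i hi
    exact h i (x i) (by rw [topk, if_pos hi])
  · intro h i b hb
    rw [topk] at hb
    by_cases hi : (i : ℕ) < m
    · rw [if_pos hi] at hb
      rw [h i (by simp [hi])]
      exact (Option.some_inj.mp hb)
    · rw [if_neg hi] at hb
      cases hb

lemma completions_subsetOf {x : Fin d → Bool} {y : Fin d → Option Bool}
    (hsub : subsetOf y x) :
    completions y = compX x (Finset.univ.filter (fun i => (y i).isSome)) := by
  ext z
  simp only [completions, compX, Finset.mem_filter, Finset.mem_univ, true_and]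
  constructor
  · intro h i hi
    obtain ⟨b, hb⟩ := Option.isSome_iff_exists.mp hi
    rw [h i b hb, hsub i b hb]
  · intro h i b hb
    have hi : (y i).isSome := by rw [hb]; rfl
    rw [h i (by simp [hi]), hsub i b hb]

lemma topk_subsetOf (x : Fin d → Bool) (m : ℕ) : subsetOf (topk x m) x := by
  intro i b hb
  rw [topk] at hb
  by_cases hi : (i : ℕ) < m
  · rw [if_pos hi] at hb; exact Option.some_inj.mp hb
  · rw [if_neg hi] at hb; cases hb

lemma definedCount_topk (x : Fin d → Bool) (m : ℕ) (hm : m ≤ d) :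
    definedCount (topk x m) = m := by
  rw [definedCount]
  have : (Finset.univ.filter (fun i : Fin d => (topk x m i).isSome)) = blockB d m := by
    ext i
    simp only [Finset.mem_filter, Finset.mem_univ, true_and, mem_blockB, topk]
    by_cases hi : (i : ℕ) < m <;> simp [hi]
  rw [this, card_blockB m hm]

lemma definedCount_le (y : Fin d → Option Bool) : definedCount y ≤ d := by
  rw [definedCount]
  calc (Finset.univ.filter (fun i => (y i).isSome)).card ≤ Finset.univ.card :=
        Finset.card_filter_le _ _
    _ = d := by simp

lemma prSame_topk_eq (w : Fin d → ℚ) (t : ℚ) (x : Fin d → Bool) (m : ℕ) (hm : m ≤ d) :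
    prSame w t x (topk x m) = ((agreeSet w t x (blockB d m)).card : ℚ) / 2 ^ (d - m) := by
  rw [prSame, completions_topk, card_compX, card_blockB m hm, agreeSet]
  push_cast
  ring

lemma prSame_le_topk (w : Fin d → ℚ) (t : ℚ) (x : Fin d → Bool)
    (hsorted : ∀ i j : Fin d, i ≤ j → score w t x j ≤ score w t x i)
    (y : Fin d → Option Bool) (hsub : subsetOf y x) :
    prSame w t x y ≤ prSame w t x (topk x (definedCount y)) := by
  classical
  set m := definedCount y with hm
  have hmd : m ≤ d := definedCount_le y
  set A := Finset.univ.filter (fun i => (y i).isSome) with hA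
  have hAcard : A.card = m := rfl
  have hcard : A.card = (blockB d m).card := by rw [hAcard, card_blockB m hmd]
  have hsc : ∀ i ∈ A \ blockB d m, ∀ j ∈ blockB d m \ A,
      score w t x i ≤ score w t x j := by
    intro i hi j hj
    have h1 : ¬ ((i : ℕ) < m) := fun h => (Finset.mem_sdiff.mp hi).2 (mem_blockB.mpr h)
    have h2 : (j : ℕ) < m := mem_blockB.mp (Finset.mem_sdiff.mp hj).1
    exact hsorted j i (by rw [Fin.le_def]; omega)
  have hkey := exchange_card w t x A (blockB d m) hcard hsc
  rw [prSame, completions_subsetOf hsub, card_compX, prSame_topk_eq w t x m hmd]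
  rw [← hA, hAcard, agreeSet] at *
  push_cast
  apply div_le_div_of_nonneg_right ?_ (by positivity)
  exact_mod_cast hkey

lemma agree_all (w : Fin d → ℚ) (t : ℚ) (x : Fin d → Bool) (m : ℕ)
    (hneg : ∀ i : Fin d, m ≤ (i : ℕ) → score w t x i ≤ 0) :
    agreeSet w t x (blockB d m) = compX x (blockB d m) := by
  rw [agreeSet, Finset.filter_eq_self]
  intro z hzm
  rw [mem_compX] at hzm
  apply agree_mono w t x x z ?_ rfl
  have hdiff : val w z - val w x = ∑ l, w l * (chi (z l) - chi (x l)) := by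
    rw [val, val, ← Finset.sum_sub_distrib]
    apply Finset.sum_congr rfl
    intro l _; ring
  rw [hdiff, Finset.mul_sum]
  apply Finset.sum_nonneg
  intro l _
  by_cases hcase : z l = x l
  · rw [hcase]; ring_nf; simp
  · have hl : m ≤ (l : ℕ) := by
      by_contra hno
      exact hcase (hzm l (mem_blockB.mpr (by omega)))
    have hzl : z l = !(x l) := by
      cases hq : z l <;> cases hx : x l <;> simp_all
    rw [hzl, chi_not]
    nlinarith [eps_mul w t x l, hneg l hl]

lemma val_update (w : Fin d → ℚ) (z : Fin d → Bool) (i : Fin d) (v : Bool) :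
    val w (Function.update z i v) = val w z + w i * (chi v - chi (z i)) := by
  rw [val, val, ← Finset.sum_erase_add _ _ (Finset.mem_univ i),
    ← Finset.sum_erase_add _ _ (Finset.mem_univ i)]
  have h1 : ∑ j ∈ Finset.univ.erase i, w j * chi (Function.update z i v j)
      = ∑ j ∈ Finset.univ.erase i, w j * chi (z j) := by
    apply Finset.sum_congr rfl
    intro j hj
    rw [Function.update_of_ne (Finset.mem_erase.mp hj).1]
  rw [h1, Function.update_self]
  ring

lemma prSame_topk_mono_step (w : Fin d → ℚ) (t : ℚ) (x : Fin d → Bool)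
    (hsorted : ∀ i j : Fin d, i ≤ j → score w t x j ≤ score w t x i)
    (m : ℕ) (hm : m < d) :
    prSame w t x (topk x m) ≤ prSame w t x (topk x (m + 1)) := by
  classical
  have hde' : d - m = (d - (m + 1)) + 1 := by omega
  set im : Fin d := ⟨m, hm⟩ with him
  have hblock : blockB d (m + 1) = insert im (blockB d m) := by
    ext i
    simp only [mem_blockB, Finset.mem_insert]
    constructor
    · intro h
      rcases Nat.lt_succ_iff_lt_or_eq.mp h with h | h
      · exact Or.inr h
      · exact Or.inl (Fin.ext h)
    · rintro (h | h)
      · rw [h]; exact Nat.lt_succ_self m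
      · exact Nat.lt_succ_of_lt h
  have hcompX : compX x (blockB d (m + 1))
      = (compX x (blockB d m)).filter (fun z => z im = x im) := by
    ext z
    simp only [mem_compX, hblock, Finset.forall_mem_insert, Finset.mem_filter, mem_compX]
    constructor
    · rintro ⟨h1, h2⟩; exact ⟨by simpa [compX] using h2, h1⟩
    · rintro ⟨h1, h2⟩; exact ⟨h2, by simpa [compX] using h1⟩
  have hagree : agreeSet w t x (blockB d (m + 1))
      = (agreeSet w t x (blockB d m)).filter (fun z => z im = x im) := by
    rw [agreeSet, agreeSet, hcompX, Finset.filter_comm]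
  rcases le_or_gt 0 (score w t x im) with hpos | hneg
  · -- injection from the disagreeing half into the agreeing half
    set N := agreeSet w t x (blockB d m) with hN
    have hsplit : (N.filter (fun z => z im = x im)).card
        + (N.filter (fun z => ¬ z im = x im)).card = N.card :=
      Finset.card_filter_add_card_filter_not _
    have hinj : (N.filter (fun z => ¬ z im = x im)).card
        ≤ (N.filter (fun z => z im = x im)).card := by
      apply Finset.card_le_card_of_injOn (fun z => Function.update z im (x im))
      · intro z hzm
        simp only [hN, agreeSet, Finset.mem_coe, Finset.mem_filter, mem_compX] at hzm ⊢
        obtain ⟨⟨hzc, hza⟩, hzn⟩ := hzm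
        have hne : z im = !(x im) := by
          cases hq : z im <;> cases hx : x im <;> simp_all
        refine ⟨⟨?_, ?_⟩, Function.update_self _ _ _⟩
        · intro i hi
          have : i ≠ im := by
            intro h; rw [h] at hi
            exact absurd (mem_blockB.mp hi) (lt_irrefl m)
          rw [Function.update_of_ne this]
          exact hzc i hi
        · apply agree_mono w t x z _ ?_ hza
          rw [val_update, hne, chi_not]
          nlinarith [eps_mul w t x im, hpos]
      · intro z1 h1 z2 h2 heq
        simp only [hN, agreeSet, Finset.coe_filter, Set.mem_setOf_eq, Finset.mem_filter,
          mem_compX] at h1 h2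
        have e1 : z1 im = !(x im) := by
          rcases h1 with ⟨-, hzn⟩
          cases hq : z1 im <;> cases hx : x im <;> simp_all
        have e2 : z2 im = !(x im) := by
          rcases h2 with ⟨-, hzn⟩
          cases hq : z2 im <;> cases hx : x im <;> simp_all
        funext l
        by_cases hl : l = im
        · rw [hl, e1, e2]
        · have h3 : Function.update z1 im (x im) l = Function.update z2 im (x im) l :=
            congrFun heq l
          rwa [Function.update_of_ne hl, Function.update_of_ne hl] at h3
    rw [prSame_topk_eq w t x m (le_of_lt hm), prSame_topk_eq w t x (m + 1) hm, hagree]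
    have hde : (2:ℚ) ^ (d - m) = 2 ^ (d - (m + 1)) * 2 := by
      rw [hde', pow_succ]
    rw [hde]
    show ((N.card : ℚ)) / (2 ^ (d - (m + 1)) * 2)
        ≤ ((N.filter (fun z => z im = x im)).card : ℚ) / 2 ^ (d - (m + 1))
    rw [div_le_div_iff₀ (by positivity) (by positivity)]
    have hq : ((N.filter (fun z => ¬ z im = x im)).card : ℚ)
        ≤ ((N.filter (fun z => z im = x im)).card : ℚ) := by exact_mod_cast hinj
    have hs : ((N.filter (fun z => z im = x im)).card : ℚ)
        + ((N.filter (fun z => ¬ z im = x im)).card : ℚ) = (N.card : ℚ) := by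
      exact_mod_cast hsplit
    have hc : (0:ℚ) ≤ 2 ^ (d - (m + 1)) := by positivity
    nlinarith [hq, hs, hc]
  · have hneg' : ∀ i : Fin d, m ≤ (i : ℕ) → score w t x i ≤ 0 := by
      intro i hi
      exact le_trans (hsorted im i (by rw [Fin.le_def]; exact hi)) (le_of_lt hneg)
    have h1 := agree_all w t x m hneg'
    have h2 := agree_all w t x (m + 1) (fun i hi => hneg' i (by omega))
    have hone : ∀ n : ℕ, ((2:ℚ) ^ n) / 2 ^ n = 1 := fun n => div_self (by positivity)
    rw [prSame_topk_eq w t x m (le_of_lt hm), prSame_topk_eq w t x (m + 1) hm, h1, h2,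
      card_compX, card_compX, card_blockB m (le_of_lt hm), card_blockB (m + 1) hm]
    push_cast
    rw [hone, hone]

lemma prSame_topk_mono (w : Fin d → ℚ) (t : ℚ) (x : Fin d → Bool)
    (hsorted : ∀ i j : Fin d, i ≤ j → score w t x j ≤ score w t x i) :
    ∀ m', m' ≤ d → ∀ m, m ≤ m' → prSame w t x (topk x m) ≤ prSame w t x (topk x m') := by
  intro m'
  induction m' with
  | zero => intro _ m hm; interval_cases m; exact le_refl _
  | succ n ih =>
    intro hn m hm
    rcases Nat.lt_succ_iff_lt_or_eq.mp (Nat.lt_succ_of_le hm) with h | h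
    · exact le_trans (ih (by omega) m (by omega))
        (prSame_topk_mono_step w t x hsorted n (by omega))
    · rw [h]

lemma prSame_topk_d (w : Fin d → ℚ) (t : ℚ) (x : Fin d → Bool) :
    prSame w t x (topk x d) = 1 := by
  have hbl : blockB d d = Finset.univ := by
    ext i
    simp [mem_blockB, i.2]
  have hcx : compX x (blockB d d) = {x} := by
    ext z
    rw [mem_compX, hbl, Finset.mem_singleton]
    constructor
    · intro h; funext i; exact h i (Finset.mem_univ i)
    · intro h i _; rw [h]
  rw [prSame, completions_topk, hcx]
  have : ({x} : Finset (Fin d → Bool)).filter (fun z => linOut w t z = linOut w t x)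
      = {x} := by
    rw [Finset.filter_eq_self]
    intro z hz
    rw [Finset.mem_singleton] at hz
    rw [hz]
  rw [this]
  norm_num

lemma mem_S_iff (w : Fin d → ℚ) (t : ℚ) (x : Fin d → Bool) (δ : ℚ)
    (hsorted : ∀ i j : Fin d, i ≤ j → score w t x j ≤ score w t x i) (n : ℕ) :
    (n ∈ {k : ℕ | ∃ y : Fin d → Option Bool,
        subsetOf y x ∧ definedCount y = k ∧ δ ≤ prSame w t x y})
      ↔ (n ≤ d ∧ δ ≤ prSame w t x (topk x n)) := by
  constructor
  · rintro ⟨y, hsub, hcount, hδ⟩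
    refine ⟨hcount ▸ definedCount_le y, ?_⟩
    calc δ ≤ prSame w t x y := hδ
      _ ≤ prSame w t x (topk x (definedCount y)) := prSame_le_topk w t x hsorted y hsub
      _ = prSame w t x (topk x n) := by rw [hcount]
  · rintro ⟨hn, hδ⟩
    exact ⟨topk x n, topk_subsetOf x n, definedCount_topk x n hn, hδ⟩

end MSR

/-- `Min(L, x, δ)`: the minimum number of defined coordinates of a `δ`-sufficient
reason `y ⊆ x` for `(L, x)`. -/
noncomputable def minSR {d : ℕ} (w : Fin d → ℚ) (t : ℚ) (x : Fin d → Bool) (δ : ℚ) : ℕ :=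
  sInf {k : ℕ | ∃ y : Fin d → Option Bool,
    subsetOf y x ∧ definedCount y = k ∧ δ ≤ prSame w t x y}

theorem minSR_iff_topk (d : ℕ) (hd : 1 ≤ d) (w : Fin d → ℚ) (t : ℚ) (x : Fin d → Bool)
    (δ : ℚ) (hδ0 : 0 < δ) (hδ1 : δ ≤ 1)
    (hsorted : ∀ i j : Fin d, i ≤ j → score w t x j ≤ score w t x i)
    (k : ℕ) (hk : k ≤ d) :
    minSR w t x δ = k ↔
      (δ ≤ prSame w t x (topk x k) ∧
        (k = 0 ∨ ¬ δ ≤ prSame w t x (topk x (k - 1)))) := by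
  classical
  set S := {k : ℕ | ∃ y : Fin d → Option Bool,
    subsetOf y x ∧ definedCount y = k ∧ δ ≤ prSame w t x y} with hS
  have hmem : ∀ n, n ∈ S ↔ (n ≤ d ∧ δ ≤ prSame w t x (topk x n)) := fun n =>
    MSR.mem_S_iff w t x δ hsorted n
  have hdS : d ∈ S := (hmem d).mpr ⟨le_refl d, by rw [MSR.prSame_topk_d]; exact hδ1⟩
  have hne : S.Nonempty := ⟨d, hdS⟩
  constructor
  · intro h
    have hkS : k ∈ S := by
      rw [← h]
      exact Nat.sInf_mem hne
    obtain ⟨-, hδk⟩ := (hmem k).mp hkS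
    refine ⟨hδk, ?_⟩
    by_cases hk0 : k = 0
    · exact Or.inl hk0
    · refine Or.inr fun hcon => ?_
      have : k - 1 ∈ S := (hmem (k - 1)).mpr ⟨by omega, hcon⟩
      have hle : minSR w t x δ ≤ k - 1 := Nat.sInf_le this
      omega
  · rintro ⟨h1, h2⟩
    have hkS : k ∈ S := (hmem k).mpr ⟨hk, h1⟩
    apply le_antisymm (Nat.sInf_le hkS)
    apply le_csInf hne
    intro b hb
    by_contra hcon
    push_neg at hcon
    obtain ⟨hbd, hδb⟩ := (hmem b).mp hb
    rcases h2 with h2 | h2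
    · omega
    · apply h2
      calc δ ≤ prSame w t x (topk x b) := hδb
        _ ≤ prSame w t x (topk x (k - 1)) :=
          MSR.prSame_topk_mono w t x hsorted (k - 1) (by omega) b (by omega)
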